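/- arXiv:1111.2679 — 8 statements merged into one kernel-verified Lean document; each statement's English description precedes it below -/
import Mathlib

section
/- Let M>0, H∈ℝ, and c₁ = -8M³H. Then for r>2M, l₁(r) = (1/√(1-2M/r))·(Hr - 8M³H/r²) satisfies l₁(r) = H·√((r-2M)/r)·(r²+2Mr+4M²)/r, and consequently f₁'(r) = H·√(r/(r-2M)) · √( r(r²+2Mr+4M²)² / ( r³ + H²(r-2M)(r²+2Mr+4M²)² ) ), which for H≠0 is of order O((r-2M)^{-1/2}) as r→2M⁺; hence ∫_{2M}^{r₀} f₁'(r) dr converges for any r₀>2M. -/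
open Real Set MeasureTheory

lemma aux1 (M H r : ℝ) (hM : 0 < M) (hr : 2 * M < r) :
    (1 / Real.sqrt (1 - 2 * M / r)) * (H * r - 8 * M ^ 3 * H / r ^ 2)
      = H * Real.sqrt ((r - 2 * M) / r) * ((r ^ 2 + 2 * M * r + 4 * M ^ 2) / r) := by
  have hr0 : 0 < r := lt_trans (by linarith) hr
  have hrm : 0 < r - 2 * M := by linarith
  have h1 : 1 - 2 * M / r = (r - 2 * M) / r := by field_simp
  rw [h1, Real.sqrt_div hrm.le]
  set s := Real.sqrt (r - 2 * M) with hs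
  set t := Real.sqrt r with ht
  have hs2 : s ^ 2 = r - 2 * M := Real.sq_sqrt hrm.le
  have ht2 : t ^ 2 = r := Real.sq_sqrt hr0.le
  have hs0 : 0 < s := Real.sqrt_pos.mpr hrm
  have ht0 : 0 < t := Real.sqrt_pos.mpr hr0
  have key : H * r - 8 * M ^ 3 * H / r ^ 2 = H * (r - 2 * M) * ((r ^ 2 + 2 * M * r + 4 * M ^ 2) / r ^ 2) := by
    field_simp
    ring
  rw [key]
  field_simp
  linear_combination (H * (r - 2 * M)) * ht2 - (H * r) * hs2

lemma aux2 (M H r : ℝ) (hM : 0 < M) (hr : 2 * M < r) :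
    ((1 / Real.sqrt (1 - 2 * M / r)) * (H * r - 8 * M ^ 3 * H / r ^ 2)) / (1 - 2 * M / r) *
        Real.sqrt (1 / (1 + ((1 / Real.sqrt (1 - 2 * M / r)) *
          (H * r - 8 * M ^ 3 * H / r ^ 2)) ^ 2))
      = H * Real.sqrt (r / (r - 2 * M)) *
          Real.sqrt (r * (r ^ 2 + 2 * M * r + 4 * M ^ 2) ^ 2 /
            (r ^ 3 + H ^ 2 * (r - 2 * M) * (r ^ 2 + 2 * M * r + 4 * M ^ 2) ^ 2)) := by
  have hr0 : 0 < r := lt_trans (by linarith) hr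
  have hrm : 0 < r - 2 * M := by linarith
  have hQ0 : 0 < r ^ 2 + 2 * M * r + 4 * M ^ 2 := by positivity
  have hD0 : 0 < r ^ 3 + H ^ 2 * (r - 2 * M) * (r ^ 2 + 2 * M * r + 4 * M ^ 2) ^ 2 := by positivity
  rw [aux1 M H r hM hr]
  have hsq : (H * Real.sqrt ((r - 2 * M) / r) * ((r ^ 2 + 2 * M * r + 4 * M ^ 2) / r)) ^ 2
      = H ^ 2 * ((r - 2 * M) / r) * ((r ^ 2 + 2 * M * r + 4 * M ^ 2) / r) ^ 2 := by
    rw [mul_pow, mul_pow, Real.sq_sqrt (by positivity : (0:ℝ) ≤ (r - 2 * M) / r)]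
  rw [hsq]
  have h2 : 1 + H ^ 2 * ((r - 2 * M) / r) * ((r ^ 2 + 2 * M * r + 4 * M ^ 2) / r) ^ 2
      = (r ^ 3 + H ^ 2 * (r - 2 * M) * (r ^ 2 + 2 * M * r + 4 * M ^ 2) ^ 2) / r ^ 3 := by
    field_simp
  rw [h2, one_div, inv_div,
    Real.sqrt_div (by positivity : (0:ℝ) ≤ r ^ 3),
    Real.sqrt_div hr0.le,
    Real.sqrt_div (by positivity : (0:ℝ) ≤ r * (r ^ 2 + 2 * M * r + 4 * M ^ 2) ^ 2),
    Real.sqrt_div hrm.le]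
  have hr3 : Real.sqrt (r ^ 3) = r * Real.sqrt r := by
    rw [show r ^ 3 = r ^ 2 * r by ring, Real.sqrt_mul (sq_nonneg r), Real.sqrt_sq hr0.le]
  have hrQ : Real.sqrt (r * (r ^ 2 + 2 * M * r + 4 * M ^ 2) ^ 2)
      = Real.sqrt r * (r ^ 2 + 2 * M * r + 4 * M ^ 2) := by
    rw [Real.sqrt_mul hr0.le, Real.sqrt_sq hQ0.le]
  rw [hr3, hrQ, show (1 : ℝ) - 2 * M / r = (r - 2 * M) / r by field_simp]
  set s := Real.sqrt (r - 2 * M) with hs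
  set t := Real.sqrt r with ht
  set u := Real.sqrt (r ^ 3 + H ^ 2 * (r - 2 * M) * (r ^ 2 + 2 * M * r + 4 * M ^ 2) ^ 2) with hu
  have hs2 : s ^ 2 = r - 2 * M := Real.sq_sqrt hrm.le
  have ht2 : t ^ 2 = r := Real.sq_sqrt hr0.le
  have hs0 : 0 < s := Real.sqrt_pos.mpr hrm
  have ht0 : 0 < t := Real.sqrt_pos.mpr hr0
  have hu0 : 0 < u := Real.sqrt_pos.mpr hD0
  have e1 : H * (s / t) * ((r ^ 2 + 2 * M * r + 4 * M ^ 2) / r) / ((r - 2 * M) / r)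
      * (r * t / u) = H * (r ^ 2 + 2 * M * r + 4 * M ^ 2) * r / (s * u) := by
    field_simp
    linear_combination H * hs2
  have e2 : H * (t / s) * (t * (r ^ 2 + 2 * M * r + 4 * M ^ 2) / u)
      = H * (r ^ 2 + 2 * M * r + 4 * M ^ 2) * r / (s * u) := by
    field_simp
    linear_combination H * ht2
  exact e1.trans e2.symm

lemma aux3 (M H r : ℝ) (hM : 0 < M) (hr : 2 * M < r) :
    |((1 / Real.sqrt (1 - 2 * M / r)) * (H * r - 8 * M ^ 3 * H / r ^ 2)) / (1 - 2 * M / r) *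
        Real.sqrt (1 / (1 + ((1 / Real.sqrt (1 - 2 * M / r)) *
          (H * r - 8 * M ^ 3 * H / r ^ 2)) ^ 2))|
      ≤ |H| * Real.sqrt r * ((r ^ 2 + 2 * M * r + 4 * M ^ 2) / r) *
          (r - 2 * M) ^ (-(1 : ℝ) / 2) := by
  have hr0 : 0 < r := lt_trans (by linarith) hr
  have hrm : 0 < r - 2 * M := by linarith
  have hQ0 : 0 < r ^ 2 + 2 * M * r + 4 * M ^ 2 := by positivity
  rw [aux2 M H r hM hr, abs_mul, abs_mul,
    abs_of_nonneg (Real.sqrt_nonneg _), abs_of_nonneg (Real.sqrt_nonneg _)]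
  have hrp : (r - 2 * M) ^ (-(1 : ℝ) / 2) = (Real.sqrt (r - 2 * M))⁻¹ := by
    rw [neg_div, Real.rpow_neg hrm.le, Real.sqrt_eq_rpow]
  have e1 : Real.sqrt (r / (r - 2 * M)) = Real.sqrt r * (r - 2 * M) ^ (-(1 : ℝ) / 2) := by
    rw [Real.sqrt_div hr0.le, hrp, div_eq_mul_inv]
  rw [e1]
  have hb : Real.sqrt (r * (r ^ 2 + 2 * M * r + 4 * M ^ 2) ^ 2 /
      (r ^ 3 + H ^ 2 * (r - 2 * M) * (r ^ 2 + 2 * M * r + 4 * M ^ 2) ^ 2))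
      ≤ (r ^ 2 + 2 * M * r + 4 * M ^ 2) / r := by
    have h1 : r * (r ^ 2 + 2 * M * r + 4 * M ^ 2) ^ 2 /
        (r ^ 3 + H ^ 2 * (r - 2 * M) * (r ^ 2 + 2 * M * r + 4 * M ^ 2) ^ 2)
        ≤ r * (r ^ 2 + 2 * M * r + 4 * M ^ 2) ^ 2 / r ^ 3 := by
      apply div_le_div_of_nonneg_left (by positivity) (by positivity)
      nlinarith [sq_nonneg (H * (r ^ 2 + 2 * M * r + 4 * M ^ 2))]
    calc Real.sqrt _ ≤ Real.sqrt (r * (r ^ 2 + 2 * M * r + 4 * M ^ 2) ^ 2 / r ^ 3) :=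
          Real.sqrt_le_sqrt h1
      _ = (r ^ 2 + 2 * M * r + 4 * M ^ 2) / r := by
          rw [show r * (r ^ 2 + 2 * M * r + 4 * M ^ 2) ^ 2 / r ^ 3
              = ((r ^ 2 + 2 * M * r + 4 * M ^ 2) / r) ^ 2 by field_simp,
            Real.sqrt_sq (by positivity)]
  calc |H| * (Real.sqrt r * (r - 2 * M) ^ (-(1 : ℝ) / 2)) * Real.sqrt _
      ≤ |H| * (Real.sqrt r * (r - 2 * M) ^ (-(1 : ℝ) / 2)) *
        ((r ^ 2 + 2 * M * r + 4 * M ^ 2) / r) := by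
        apply mul_le_mul_of_nonneg_left hb (by positivity)
    _ = |H| * Real.sqrt r * ((r ^ 2 + 2 * M * r + 4 * M ^ 2) / r) *
        (r - 2 * M) ^ (-(1 : ℝ) / 2) := by ring

lemma aux4 (M H R r : ℝ) (hM : 0 < M) (hr : 2 * M < r) (hR : r ≤ R) :
    |((1 / Real.sqrt (1 - 2 * M / r)) * (H * r - 8 * M ^ 3 * H / r ^ 2)) / (1 - 2 * M / r) *
        Real.sqrt (1 / (1 + ((1 / Real.sqrt (1 - 2 * M / r)) *
          (H * r - 8 * M ^ 3 * H / r ^ 2)) ^ 2))|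
      ≤ |H| * Real.sqrt R * ((R ^ 2 + 2 * M * R + 4 * M ^ 2) / (2 * M)) *
          (r - 2 * M) ^ (-(1 : ℝ) / 2) := by
  have hr0 : 0 < r := lt_trans (by linarith) hr
  have hrm : 0 < r - 2 * M := by linarith
  refine le_trans (aux3 M H r hM hr) ?_
  have hw : (0:ℝ) ≤ (r - 2 * M) ^ (-(1 : ℝ) / 2) := Real.rpow_nonneg hrm.le _
  apply mul_le_mul_of_nonneg_right _ hw
  have h1 : Real.sqrt r ≤ Real.sqrt R := Real.sqrt_le_sqrt hR
  have h2 : (r ^ 2 + 2 * M * r + 4 * M ^ 2) / r ≤ (R ^ 2 + 2 * M * R + 4 * M ^ 2) / (2 * M) := by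
    have hR0 : 0 < R := lt_of_lt_of_le hr0 hR
    apply div_le_div₀ (by nlinarith) (by nlinarith) (by linarith) hr.le
  calc |H| * Real.sqrt r * ((r ^ 2 + 2 * M * r + 4 * M ^ 2) / r)
      ≤ |H| * Real.sqrt R * ((R ^ 2 + 2 * M * R + 4 * M ^ 2) / (2 * M)) := by
        apply mul_le_mul (mul_le_mul_of_nonneg_left h1 (abs_nonneg _)) h2 (by positivity)
          (by positivity)

/-- The borderline case `c₁ = -8M³H`: explicit formulas for `l₁` and `f₁'`, the order
`O((r-2M)^{-1/2})` when `H ≠ 0`, and integrability of `f₁'` near `r = 2M`. -/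
theorem stmt_7 (M H : ℝ) (hM : 0 < M) :
    (∀ r : ℝ, 2 * M < r →
      (1 / Real.sqrt (1 - 2 * M / r)) * (H * r - 8 * M ^ 3 * H / r ^ 2)
        = H * Real.sqrt ((r - 2 * M) / r) * ((r ^ 2 + 2 * M * r + 4 * M ^ 2) / r)) ∧
    (∀ r : ℝ, 2 * M < r →
      ((1 / Real.sqrt (1 - 2 * M / r)) * (H * r - 8 * M ^ 3 * H / r ^ 2)) / (1 - 2 * M / r) *
        Real.sqrt (1 / (1 + ((1 / Real.sqrt (1 - 2 * M / r)) *
          (H * r - 8 * M ^ 3 * H / r ^ 2)) ^ 2))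
        = H * Real.sqrt (r / (r - 2 * M)) *
          Real.sqrt (r * (r ^ 2 + 2 * M * r + 4 * M ^ 2) ^ 2 /
            (r ^ 3 + H ^ 2 * (r - 2 * M) * (r ^ 2 + 2 * M * r + 4 * M ^ 2) ^ 2))) ∧
    (H ≠ 0 → ∃ C > (0 : ℝ), ∃ δ > (0 : ℝ), ∀ r ∈ Set.Ioo (2 * M) (2 * M + δ),
      |((1 / Real.sqrt (1 - 2 * M / r)) * (H * r - 8 * M ^ 3 * H / r ^ 2)) / (1 - 2 * M / r) *
        Real.sqrt (1 / (1 + ((1 / Real.sqrt (1 - 2 * M / r)) *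
          (H * r - 8 * M ^ 3 * H / r ^ 2)) ^ 2))|
        ≤ C * (r - 2 * M) ^ (-(1 : ℝ) / 2)) ∧
    (∀ r₀ : ℝ, 2 * M < r₀ →
      MeasureTheory.IntegrableOn
        (fun r : ℝ =>
          ((1 / Real.sqrt (1 - 2 * M / r)) * (H * r - 8 * M ^ 3 * H / r ^ 2)) / (1 - 2 * M / r) *
            Real.sqrt (1 / (1 + ((1 / Real.sqrt (1 - 2 * M / r)) *
              (H * r - 8 * M ^ 3 * H / r ^ 2)) ^ 2)))
        (Set.Ioc (2 * M) r₀)) := by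
  refine ⟨fun r hr => aux1 M H r hM hr, fun r hr => aux2 M H r hM hr, ?_, ?_⟩
  · intro hH
    refine ⟨|H| * Real.sqrt (3 * M) * (((3 * M) ^ 2 + 2 * M * (3 * M) + 4 * M ^ 2) / (2 * M)),
      ?_, M, hM, fun r hr => ?_⟩
    · apply mul_pos (mul_pos (abs_pos.mpr hH) (Real.sqrt_pos.mpr (by linarith)))
      apply div_pos (by nlinarith) (by linarith)
    · exact aux4 M H (3 * M) r hM hr.1 (by have := hr.2; linarith)
  · intro r₀ hr₀
    have h1 : IntervalIntegrable (fun x : ℝ => x ^ (-(1 : ℝ) / 2)) volume 0 (r₀ - 2 * M) :=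
      intervalIntegral.intervalIntegrable_rpow' (by norm_num)
    have h2 := h1.comp_sub_right (2 * M)
    rw [zero_add, sub_add_cancel] at h2
    have hb : MeasureTheory.IntegrableOn
        (fun r : ℝ => |H| * Real.sqrt r₀ * ((r₀ ^ 2 + 2 * M * r₀ + 4 * M ^ 2) / (2 * M)) *
          (r - 2 * M) ^ (-(1 : ℝ) / 2)) (Set.Ioc (2 * M) r₀) :=
      ((intervalIntegrable_iff_integrableOn_Ioc_of_le hr₀.le).mp h2).const_mul _
    refine hb.mono' ?_ ?_
    · apply Measurable.aestronglyMeasurable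
      fun_prop
    · filter_upwards [MeasureTheory.ae_restrict_mem measurableSet_Ioc] with r hr
      rw [Real.norm_eq_abs]
      exact aux4 M H r₀ r hM hr.1 hr.2
end

section
/- Let M>0, H∈ℝ, c₁ > -8M³H. Define f₁'(r)=(l₁(r)/h(r))·√(1/(1+l₁(r)²)) with h(r)=1-2M/r, l₁(r)=(1/√h(r))(Hr+c₁/r²). Then there exists δ>0 such that on (2M, 2M+δ): 1/h(r) - 1/(2(Hr+c₁/r²)²) ≤ f₁'(r) ≤ 1/h(r). -/
open Real Set

private lemma key_aux (h P : ℝ) (hh : 0 < h) (hP : 0 < P) (h3 : h ≤ 3 * P ^ 2) :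
    1 / h - 1 / (2 * P ^ 2) ≤ 1 / Real.sqrt h * P / h * Real.sqrt (1 / (1 + (1 / Real.sqrt h * P) ^ 2)) ∧
    1 / Real.sqrt h * P / h * Real.sqrt (1 / (1 + (1 / Real.sqrt h * P) ^ 2)) ≤ 1 / h := by
  have hspos : 0 < Real.sqrt h := Real.sqrt_pos.mpr hh
  have hs2 : Real.sqrt h ^ 2 = h := Real.sq_sqrt hh.le
  have hQpos : 0 < h + P ^ 2 := by positivity
  have htpos : 0 < Real.sqrt (h + P ^ 2) := Real.sqrt_pos.mpr hQpos
  have ht2 : Real.sqrt (h + P ^ 2) ^ 2 = h + P ^ 2 := Real.sq_sqrt hQpos.le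
  set s := Real.sqrt h
  set t := Real.sqrt (h + P ^ 2)
  have hexpr : 1 / s * P / h * Real.sqrt (1 / (1 + (1 / s * P) ^ 2)) = P / (h * t) := by
    have h1 : 1 / (1 + (1 / s * P) ^ 2) = h / (h + P ^ 2) := by
      field_simp
      nlinarith [hs2]
    rw [h1, Real.sqrt_div hh.le]
    field_simp
    ring
  rw [hexpr]
  -- key inequality: (2P² - h) * t ≤ 2P³
  have hkey : (2 * P ^ 2 - h) * t ≤ 2 * P ^ 3 := by
    have hts : ((2 * P ^ 2 - h) * t) ^ 2 ≤ (2 * P ^ 3) ^ 2 := by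
      rw [mul_pow, ht2]
      nlinarith [mul_le_mul_of_nonneg_right h3 (sq_nonneg h)]
    rcases le_or_gt ((2 * P ^ 2 - h) * t) 0 with hc | hc
    · nlinarith [pow_pos hP 3]
    · nlinarith [hts, hc, pow_pos hP 3]
  constructor
  · have heq : 1 / h - 1 / (2 * P ^ 2) = (2 * P ^ 2 - h) / (2 * P ^ 2 * h) := by
      rw [div_sub_div _ _ hh.ne' (by positivity : (2 * P ^ 2 : ℝ) ≠ 0)]; ring
    rw [heq, div_le_div_iff₀ (by positivity) (by positivity)]
    nlinarith [mul_le_mul_of_nonneg_right hkey hh.le]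
  · rw [div_le_div_iff₀ (by positivity) hh]
    have hPt : P ≤ t := by
      rw [show P = Real.sqrt (P ^ 2) by rw [Real.sqrt_sq hP.le]]
      exact Real.sqrt_le_sqrt (by nlinarith)
    nlinarith [mul_le_mul_of_nonneg_left hPt hh.le]

/-- For `c₁ > -8M³H`, near the horizon one has
`1/h(r) - 1/(2(Hr+c₁/r²)²) ≤ f₁'(r) ≤ 1/h(r)`. -/
theorem stmt_8 (M H c₁ : ℝ) (hM : 0 < M) (hc : c₁ > -8 * M ^ 3 * H) :
    ∃ δ > (0 : ℝ), ∀ r ∈ Set.Ioo (2 * M) (2 * M + δ),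
      1 / (1 - 2 * M / r) - 1 / (2 * (H * r + c₁ / r ^ 2) ^ 2)
        ≤ ((1 / Real.sqrt (1 - 2 * M / r)) * (H * r + c₁ / r ^ 2)) / (1 - 2 * M / r) *
            Real.sqrt (1 / (1 + ((1 / Real.sqrt (1 - 2 * M / r)) * (H * r + c₁ / r ^ 2)) ^ 2)) ∧
      ((1 / Real.sqrt (1 - 2 * M / r)) * (H * r + c₁ / r ^ 2)) / (1 - 2 * M / r) *
          Real.sqrt (1 / (1 + ((1 / Real.sqrt (1 - 2 * M / r)) * (H * r + c₁ / r ^ 2)) ^ 2))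
        ≤ 1 / (1 - 2 * M / r) := by
  set P₀ : ℝ := H * (2 * M) + c₁ / (2 * M) ^ 2 with hP₀
  have hM2 : (0 : ℝ) < 2 * M := by linarith
  have hP₀pos : 0 < P₀ := by
    have h1 : (-8 * M ^ 3 * H) / (2 * M) ^ 2 < c₁ / (2 * M) ^ 2 :=
      (div_lt_div_iff_of_pos_right (by positivity)).mpr hc
    have h2 : (-8 * M ^ 3 * H) / (2 * M) ^ 2 = -(H * (2 * M)) := by
      field_simp; ring
    rw [hP₀]; linarith
  -- continuity of g r = H*r + c₁/r² at 2M
  have hg : ContinuousAt (fun r : ℝ => H * r + c₁ / r ^ 2) (2 * M) := by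
    apply ContinuousAt.add
    · fun_prop
    · exact ContinuousAt.div continuousAt_const (by fun_prop) (by positivity)
  have hh : ContinuousAt (fun r : ℝ => 1 - 2 * M / r) (2 * M) := by
    apply ContinuousAt.sub continuousAt_const
    exact ContinuousAt.div continuousAt_const continuousAt_id (by positivity)
  have hε : (0 : ℝ) < 3 * (P₀ / 2) ^ 2 := by positivity
  have e1 : ∀ᶠ r in nhds (2 * M), P₀ / 2 < H * r + c₁ / r ^ 2 := by
    have := hg.eventually (eventually_gt_nhds (show P₀ / 2 < H * (2 * M) + c₁ / (2 * M) ^ 2 by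
      rw [← hP₀]; exact half_lt_self hP₀pos))
    exact this
  have e2 : ∀ᶠ r in nhds (2 * M), 1 - 2 * M / r < 3 * (P₀ / 2) ^ 2 := by
    have hval : (1 : ℝ) - 2 * M / (2 * M) = 0 := by field_simp; ring
    have := hh.eventually (eventually_lt_nhds (show (1 : ℝ) - 2 * M / (2 * M) < 3 * (P₀ / 2) ^ 2 by
      rw [hval]; exact hε))
    exact this
  rcases Metric.eventually_nhds_iff.mp (e1.and e2) with ⟨δ, hδpos, hδ⟩
  refine ⟨δ, hδpos, fun r hr => ?_⟩
  obtain ⟨hr1, hr2⟩ := hr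
  have hrd : dist r (2 * M) < δ := by
    rw [Real.dist_eq, abs_lt]; constructor <;> linarith
  obtain ⟨hgP, hhr⟩ := hδ hrd
  have hrpos : 0 < r := by linarith
  have hhpos : 0 < 1 - 2 * M / r := by
    rw [sub_pos, div_lt_one hrpos]; linarith
  have hPpos : 0 < H * r + c₁ / r ^ 2 := by linarith [half_pos hP₀pos]
  have h3 : 1 - 2 * M / r ≤ 3 * (H * r + c₁ / r ^ 2) ^ 2 := by
    nlinarith [half_pos hP₀pos]
  exact key_aux (1 - 2 * M / r) (H * r + c₁ / r ^ 2) hhpos hPpos h3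
end

section
/- Let M>0, H∈ℝ, c₁ > -8M³H. Let f₁ satisfy f₁'(r)=(l₁(r)/h(r))·√(1/(1+l₁(r)²)) near r=2M (h, l₁ as usual). Then f₁(r) → -∞ as r → 2M⁺, and moreover there exist constants C₃, C₄ such that (r+2M·ln(r-2M)) + C₄ ≤ f₁(r) ≤ (r+2M·ln(r-2M)) + C₃ + C₄ for r near 2M. -/
open Real Set Filter

/-- Key analytic estimate: the SS-CMC slope differs from `1/h` by at most `1/(2a₀²)`
when the angular factor `ar` is at least `a₀ > 0` and `h > 0`. -/
lemma stmt_9_aux (h ar a₀ : ℝ) (hh : 0 < h) (ha₀ : 0 < a₀) (har : a₀ ≤ ar) :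
    |1 / Real.sqrt h * ar / h * Real.sqrt (1 / (1 + (1 / Real.sqrt h * ar) ^ 2)) - 1 / h|
      ≤ 1 / (2 * a₀ ^ 2) := by
  have hapos : 0 < ar := lt_of_lt_of_le ha₀ har
  have hsh : 0 < Real.sqrt h := Real.sqrt_pos.2 hh
  have hshsq : Real.sqrt h ^ 2 = h := Real.sq_sqrt hh.le
  set s := Real.sqrt (h + ar ^ 2) with hs_def
  have hs2 : s ^ 2 = h + ar ^ 2 := Real.sq_sqrt (by positivity)
  have hsa : ar ≤ s := by
    rw [hs_def]
    calc ar = Real.sqrt (ar ^ 2) := (Real.sqrt_sq hapos.le).symm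
      _ ≤ _ := Real.sqrt_le_sqrt (by linarith)
  have hspos : 0 < s := lt_of_lt_of_le hapos hsa
  have e0 : (1 / Real.sqrt h * ar) ^ 2 = ar ^ 2 / h := by
    rw [mul_pow, div_pow, one_pow, hshsq]; ring
  have e1 : 1 + (1 / Real.sqrt h * ar) ^ 2 = (h + ar ^ 2) / h := by
    rw [e0]; field_simp
  have e2 : Real.sqrt (1 / ((h + ar ^ 2) / h)) = Real.sqrt h / s := by
    rw [one_div, inv_div, Real.sqrt_div hh.le]
  have hDval : 1 / Real.sqrt h * ar / h * Real.sqrt (1 / (1 + (1 / Real.sqrt h * ar) ^ 2))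
      = ar / (h * s) := by
    rw [e1, e2]
    field_simp
  rw [hDval, abs_le]
  constructor
  · -- 1/h - ar/(h*s) ≤ 1/(2a₀²), i.e. lower bound on ar/(h*s) - 1/h
    have e3 : 1 / h - ar / (h * s) = (s - ar) / (h * s) := by field_simp
    have e4 : (s - ar) * (s + ar) = h := by nlinarith
    have hsum : 0 < s + ar := by linarith
    have e5 : s - ar = h / (s + ar) := by
      rw [eq_div_iff (ne_of_gt hsum)]; exact e4
    have h1 : (s - ar) / (h * s) ≤ 1 / (2 * a₀ ^ 2) := by
      rw [div_le_div_iff₀ (by positivity) (by positivity), e5, div_mul_eq_mul_div,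
        div_le_iff₀ hsum]
      have h6 : 2 * a₀ ^ 2 ≤ s * (s + ar) := by nlinarith
      nlinarith [mul_le_mul_of_nonneg_left h6 hh.le]
    linarith [e3 ▸ h1]
  · -- ar/(h*s) ≤ 1/h
    have hub : ar / (h * s) ≤ 1 / h := by
      rw [div_le_div_iff₀ (by positivity) hh]
      nlinarith
    have : 0 < 1 / (2 * a₀ ^ 2) := by positivity
    linarith

/-- For `c₁ > -8M³H`, a function `f₁` with the SS-CMC slope near the horizon satisfies
`f₁(r) → -∞` as `r → 2M⁺` and is trapped between two null geodesics. -/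
theorem stmt_9 (M H c₁ : ℝ) (hM : 0 < M) (hc : c₁ > -8 * M ^ 3 * H) (f₁ : ℝ → ℝ) (δ : ℝ)
    (hδ : 0 < δ)
    (hf : ∀ r ∈ Set.Ioo (2 * M) (2 * M + δ),
      HasDerivAt f₁
        (((1 / Real.sqrt (1 - 2 * M / r)) * (H * r + c₁ / r ^ 2)) / (1 - 2 * M / r) *
          Real.sqrt (1 / (1 + ((1 / Real.sqrt (1 - 2 * M / r)) * (H * r + c₁ / r ^ 2)) ^ 2))) r) :
    Filter.Tendsto f₁ (nhdsWithin (2 * M) (Set.Ioi (2 * M))) Filter.atBot ∧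
    ∃ C₃ C₄ : ℝ, ∃ δ' > (0 : ℝ), ∀ r ∈ Set.Ioo (2 * M) (2 * M + δ'),
      (r + 2 * M * Real.log (r - 2 * M)) + C₄ ≤ f₁ r ∧
      f₁ r ≤ (r + 2 * M * Real.log (r - 2 * M)) + C₃ + C₄ := by
  have hM2 : (0:ℝ) < 2 * M := by linarith
  -- positivity of the angular factor at the horizon
  have hA0 : 0 < H * (2*M) + c₁ / (2*M) ^ 2 := by
    have h4 : (0:ℝ) < (2*M)^2 := by positivity
    have : H * (2*M) + c₁ / (2*M) ^ 2 = (8*M^3*H + c₁) / (2*M)^2 := by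
      field_simp; ring
    rw [this]
    apply div_pos _ h4
    nlinarith
  set a₀ : ℝ := (H * (2*M) + c₁ / (2*M) ^ 2) / 2 with ha₀
  have ha₀pos : 0 < a₀ := by positivity
  -- continuity of the angular factor at 2M yields a lower bound a₀ near the horizon
  have hcont : ContinuousAt (fun r : ℝ => H * r + c₁ / r ^ 2) (2*M) := by
    apply ContinuousAt.add
    · exact (continuous_const.mul continuous_id).continuousAt
    · exact ContinuousAt.div continuousAt_const (continuousAt_id.pow 2) (by positivity)
  obtain ⟨ε, hε0, hεa⟩ : ∃ ε > 0, ∀ r : ℝ, dist r (2*M) < ε → a₀ ≤ H * r + c₁ / r ^ 2 := by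
    rcases Metric.continuousAt_iff.1 hcont a₀ ha₀pos with ⟨ε, hε0, hε⟩
    refine ⟨ε, hε0, fun r hr => ?_⟩
    have h1 := hε hr
    rw [Real.dist_eq] at h1
    have h2 := (abs_lt.1 h1).1
    simp only [ha₀] at *
    linarith
  set δ' : ℝ := min δ ε / 2 with hδ'def
  have hδ'pos : 0 < δ' := by positivity
  have hδ'δ : δ' ≤ δ := by
    have := min_le_left δ ε
    simp only [hδ'def]; linarith
  have hδ'ε : δ' < ε := by
    have := min_le_right δ ε
    simp only [hδ'def]; linarith
  set K : ℝ := 1 / (2 * a₀ ^ 2) with hK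
  have hKpos : 0 < K := by positivity
  -- auxiliary functions
  set g : ℝ → ℝ := fun r => r + 2 * M * Real.log (r - 2 * M) with hg
  set D : ℝ → ℝ := fun r =>
      ((1 / Real.sqrt (1 - 2 * M / r)) * (H * r + c₁ / r ^ 2)) / (1 - 2 * M / r) *
        Real.sqrt (1 / (1 + ((1 / Real.sqrt (1 - 2 * M / r)) * (H * r + c₁ / r ^ 2)) ^ 2)) with hD
  set φ : ℝ → ℝ := fun r => f₁ r - g r with hφ
  set D' : ℝ → ℝ := fun r => D r - (1 + 2 * M * (1 / (r - 2*M))) with hD'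
  have key : ∀ r ∈ Set.Ioo (2*M) (2*M + δ'), HasDerivAt φ (D' r) r ∧ ‖D' r‖ ≤ K := by
    intro r hr
    obtain ⟨hr1, hr2⟩ := hr
    have hr0 : 0 < r := lt_trans hM2 hr1
    have hrm : 0 < r - 2*M := by linarith
    have hh : 0 < 1 - 2*M/r := by
      rw [sub_pos, div_lt_one hr0]; exact hr1
    have har : a₀ ≤ H * r + c₁ / r ^ 2 := by
      apply hεa
      rw [Real.dist_eq, abs_of_pos hrm]
      linarith
    -- derivative of g
    have hgd : HasDerivAt g (1 + 2 * M * (1 / (r - 2*M))) r := by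
      have h1 : HasDerivAt (fun r : ℝ => r - 2*M) 1 r := (hasDerivAt_id r).sub_const _
      have h2 : HasDerivAt (fun r : ℝ => Real.log (r - 2*M)) (1 / (r - 2*M)) r := by
        simpa using h1.log (ne_of_gt hrm)
      exact (hasDerivAt_id' r).add ((h2.const_mul (2*M)))
    have hfd : HasDerivAt f₁ (D r) r := hf r ⟨hr1, by linarith⟩
    refine ⟨hfd.sub hgd, ?_⟩
    have hgd_eq : 1 + 2 * M * (1 / (r - 2*M)) = 1 / (1 - 2*M/r) := by
      field_simp
      ring
    have := stmt_9_aux (1 - 2*M/r) (H * r + c₁ / r ^ 2) a₀ hh ha₀pos har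
    rw [hK]
    show |D r - (1 + 2 * M * (1 / (r - 2*M)))| ≤ 1 / (2 * a₀ ^ 2)
    rw [hgd_eq]
    exact this
  -- mean value theorem: φ is trapped near its value at the midpoint
  have hconv : Convex ℝ (Set.Ioo (2*M) (2*M+δ')) := convex_Ioo _ _
  set r₀ : ℝ := 2*M + δ'/2 with hr₀
  have hr₀mem : r₀ ∈ Set.Ioo (2*M) (2*M+δ') := by
    constructor <;> (simp only [hr₀]; linarith)
  have hbound : ∀ r ∈ Set.Ioo (2*M) (2*M+δ'), ‖φ r - φ r₀‖ ≤ K * δ' := by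
    intro r hr
    have h1 := Convex.norm_image_sub_le_of_norm_hasDerivWithin_le
      (f := φ) (f' := D') (s := Set.Ioo (2*M) (2*M+δ')) (C := K)
      (fun x hx => ((key x hx).1).hasDerivWithinAt) (fun x hx => (key x hx).2)
      hconv hr₀mem hr
    refine le_trans h1 ?_
    have h2 : ‖r - r₀‖ ≤ δ' := by
      rw [Real.norm_eq_abs, abs_le]
      obtain ⟨ha, hb⟩ := hr
      constructor <;> (simp only [hr₀] at *; linarith)
    nlinarith
  -- the two-sided bound
  have main : ∀ r ∈ Set.Ioo (2*M) (2*M+δ'),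
      (r + 2 * M * Real.log (r - 2 * M)) + (φ r₀ - K*δ') ≤ f₁ r ∧
      f₁ r ≤ (r + 2 * M * Real.log (r - 2 * M)) + (2*K*δ') + (φ r₀ - K*δ') := by
    intro r hr
    have hb := hbound r hr
    rw [Real.norm_eq_abs, abs_le] at hb
    obtain ⟨hb1, hb2⟩ := hb
    have hφr : φ r = f₁ r - (r + 2 * M * Real.log (r - 2 * M)) := rfl
    rw [hφr] at hb1 hb2
    constructor <;> linarith
  refine ⟨?_, 2*K*δ', φ r₀ - K*δ', δ', hδ'pos, main⟩
  -- tendsto atBot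
  have hmem : Set.Ioo (2*M) (2*M+δ') ∈ nhdsWithin (2*M) (Set.Ioi (2*M)) :=
    Ioo_mem_nhdsGT_of_mem ⟨le_refl _, by linarith⟩
  have hglim : Tendsto (fun r => r + 2 * M * Real.log (r - 2*M) + 2*K*δ' + (φ r₀ - K*δ'))
      (nhdsWithin (2*M) (Set.Ioi (2*M))) atBot := by
    apply tendsto_atBot_add_const_right
    apply tendsto_atBot_add_const_right
    apply Filter.Tendsto.add_atBot (C := 2*M)
    · exact Filter.tendsto_id.mono_left nhdsWithin_le_nhds
    · apply Filter.Tendsto.const_mul_atBot hM2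
      apply Real.tendsto_log_nhdsGT_zero.comp
      rw [tendsto_nhdsWithin_iff]
      constructor
      · have h3 : Tendsto (fun r : ℝ => r - 2*M) (nhds (2*M)) (nhds (2*M - 2*M)) :=
          (tendsto_id.sub_const _)
        simpa using h3.mono_left nhdsWithin_le_nhds
      · filter_upwards [self_mem_nhdsWithin] with r hr
        simp only [Set.mem_Ioi] at *
        linarith
  apply tendsto_atBot_mono' _ _ hglim
  filter_upwards [hmem] with r hr
  exact (main r hr).2
end

section
/- Let M>0 and H∈ℝ. The equation 3H·r^{3/2}(2M-r)^{1/2} = 2r - 3M has a unique solution r_H ∈ (0,2M), and r_H is the unique critical point of k_H(r) = -Hr³ - r^{3/2}(2M-r)^{1/2} on (0,2M); moreover k_H attains its minimum on (0,2M) at r_H. -/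
open Real Set

section Stmt13Aux

lemma aux_hasDerivAt_k {M H r : ℝ} (hr : 0 < r) (hr2 : r < 2 * M) :
    HasDerivAt (fun r : ℝ => -H * r ^ 3 - Real.sqrt (r ^ 3) * Real.sqrt (2 * M - r))
      (r ^ 2 * (2 * r - 3 * M - 3 * H * (Real.sqrt (r ^ 3) * Real.sqrt (2 * M - r))) /
        (Real.sqrt (r ^ 3) * Real.sqrt (2 * M - r))) r := by
  have hr3 : (0:ℝ) < r ^ 3 := by positivity
  have h2 : (0:ℝ) < 2 * M - r := by linarith
  have ha : (0:ℝ) < Real.sqrt (r ^ 3) := Real.sqrt_pos.2 hr3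
  have hb : (0:ℝ) < Real.sqrt (2 * M - r) := Real.sqrt_pos.2 h2
  have ha2 : Real.sqrt (r ^ 3) ^ 2 = r ^ 3 := Real.sq_sqrt hr3.le
  have hb2 : Real.sqrt (2 * M - r) ^ 2 = 2 * M - r := Real.sq_sqrt h2.le
  have hA : HasDerivAt (fun r : ℝ => Real.sqrt (r ^ 3))
      (1 / (2 * Real.sqrt (r ^ 3)) * (3 * r ^ 2)) r := by
    have := ((hasDerivAt_pow 3 r).sqrt hr3.ne')
    convert this using 1
    push_cast
    ring_nf
  have hB : HasDerivAt (fun r : ℝ => Real.sqrt (2 * M - r))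
      (1 / (2 * Real.sqrt (2 * M - r)) * (-1)) r := by
    have hin : HasDerivAt (fun r : ℝ => 2 * M - r) (-1) r := by
      simpa using (hasDerivAt_id' r).const_sub (2*M)
    have := hin.sqrt h2.ne'
    convert this using 1
    ring
  have hP : HasDerivAt (fun r : ℝ => -H * r ^ 3) (-H * (3 * r ^ 2)) r := by
    have := (hasDerivAt_pow 3 r).const_mul (-H)
    exact this.congr_deriv (by norm_num)
  have hk := hP.sub (hA.mul hB)
  refine hk.congr_deriv (Eq.symm ?_)
  field_simp
  linear_combination (-1) * ha2 + (3*r^2) * hb2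

lemma aux_hasDerivAt_g {M r : ℝ} (hr : 0 < r) (hr2 : r < 2 * M) :
    ∃ d, 0 < d ∧ HasDerivAt (fun r : ℝ =>
        (2 * r - 3 * M) / (Real.sqrt (r ^ 3) * Real.sqrt (2 * M - r))) d r := by
  have hr3 : (0:ℝ) < r ^ 3 := by positivity
  have h2 : (0:ℝ) < 2 * M - r := by linarith
  have ha : (0:ℝ) < Real.sqrt (r ^ 3) := Real.sqrt_pos.2 hr3
  have hb : (0:ℝ) < Real.sqrt (2 * M - r) := Real.sqrt_pos.2 h2
  have ha2 : Real.sqrt (r ^ 3) ^ 2 = r ^ 3 := Real.sq_sqrt hr3.le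
  have hb2 : Real.sqrt (2 * M - r) ^ 2 = 2 * M - r := Real.sq_sqrt h2.le
  have hA : HasDerivAt (fun r : ℝ => Real.sqrt (r ^ 3))
      (1 / (2 * Real.sqrt (r ^ 3)) * (3 * r ^ 2)) r := by
    have := ((hasDerivAt_pow 3 r).sqrt hr3.ne')
    convert this using 1
    push_cast
    ring_nf
  have hB : HasDerivAt (fun r : ℝ => Real.sqrt (2 * M - r))
      (1 / (2 * Real.sqrt (2 * M - r)) * (-1)) r := by
    have hin : HasDerivAt (fun r : ℝ => 2 * M - r) (-1) r := by
      simpa using (hasDerivAt_id' r).const_sub (2*M)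
    have := hin.sqrt h2.ne'
    convert this using 1
    ring
  have hN : HasDerivAt (fun r : ℝ => 2 * r - 3 * M) 2 r := by
    simpa using ((hasDerivAt_id' r).const_mul 2).sub_const (3*M)
  have hD := hA.mul hB
  have hDne : Real.sqrt (r ^ 3) * Real.sqrt (2 * M - r) ≠ 0 := by positivity
  have hg := hN.div hD hDne
  refine ⟨_, ?_, hg⟩
  set a := Real.sqrt (r ^ 3) with ha_def
  set b := Real.sqrt (2 * M - r) with hb_def
  have key : (2 * (a * b) - (2 * r - 3 * M) *
      (1 / (2 * a) * (3 * r ^ 2) * b + a * (1 / (2 * b) * (-1)))) * (2 * a * b)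
      = 2 * r ^ 2 * (2 * (r - 2 * M) ^ 2 + M ^ 2) := by
    field_simp
    linear_combination (4*b^2 + (2*r - 3*M)) * ha2 + (4*r^3 - 3*r^2*(2*r-3*M)) * hb2
  have hpos : 0 < 2 * r ^ 2 * (2 * (r - 2 * M) ^ 2 + M ^ 2) := by
    have hM : 0 < M := by linarith
    positivity
  have hnum : 0 < 2 * (a * b) - (2 * r - 3 * M) *
      (1 / (2 * a) * (3 * r ^ 2) * b + a * (1 / (2 * b) * (-1))) := by
    nlinarith [mul_pos ha hb, key, hpos]
  exact div_pos hnum (by positivity)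

end Stmt13Aux

/-- The equation `3H r^{3/2}(2M-r)^{1/2} = 2r - 3M` has a unique solution `r_H ∈ (0,2M)`,
which is the unique critical point of `k_H(r) = -Hr³ - r^{3/2}(2M-r)^{1/2}` on `(0,2M)`,
and `k_H` attains its minimum on `(0,2M)` at `r_H`. -/
theorem stmt_13 (M H : ℝ) (hM : 0 < M) :
    ∃ rH ∈ Set.Ioo (0 : ℝ) (2 * M),
      3 * H * Real.sqrt (rH ^ 3) * Real.sqrt (2 * M - rH) = 2 * rH - 3 * M ∧
      (∀ r ∈ Set.Ioo (0 : ℝ) (2 * M),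
        3 * H * Real.sqrt (r ^ 3) * Real.sqrt (2 * M - r) = 2 * r - 3 * M → r = rH) ∧
      (∀ r ∈ Set.Ioo (0 : ℝ) (2 * M),
        deriv (fun r : ℝ => -H * r ^ 3 - Real.sqrt (r ^ 3) * Real.sqrt (2 * M - r)) r = 0
          ↔ r = rH) ∧
      (∀ r ∈ Set.Ioo (0 : ℝ) (2 * M),
        -H * rH ^ 3 - Real.sqrt (rH ^ 3) * Real.sqrt (2 * M - rH)
          ≤ -H * r ^ 3 - Real.sqrt (r ^ 3) * Real.sqrt (2 * M - r)) := by
  set k : ℝ → ℝ := fun r => -H * r ^ 3 - Real.sqrt (r ^ 3) * Real.sqrt (2 * M - r) with hk_def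
  set g : ℝ → ℝ := fun r => (2 * r - 3 * M) / (Real.sqrt (r ^ 3) * Real.sqrt (2 * M - r))
    with hg_def
  set E : ℝ → ℝ := fun r => 2 * r - 3 * M - 3 * H * (Real.sqrt (r ^ 3) * Real.sqrt (2 * M - r))
    with hE_def
  -- basic facts on Ioo
  have habpos : ∀ r ∈ Set.Ioo (0:ℝ) (2*M), 0 < Real.sqrt (r ^ 3) * Real.sqrt (2 * M - r) := by
    rintro r ⟨h1, h2⟩
    have : (0:ℝ) < r ^ 3 := by positivity
    exact mul_pos (Real.sqrt_pos.2 this) (Real.sqrt_pos.2 (by linarith))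
  -- continuity
  have hsqcont : Continuous fun r : ℝ => Real.sqrt (r ^ 3) * Real.sqrt (2 * M - r) :=
    (Real.continuous_sqrt.comp (continuous_pow 3)).mul
      (Real.continuous_sqrt.comp (continuous_const.sub continuous_id))
  have hkcont : Continuous k := (continuous_const.mul (continuous_pow 3)).sub hsqcont
  have hEcont : Continuous E :=
    ((continuous_const.mul continuous_id).sub continuous_const).sub
      (continuous_const.mul hsqcont)
  have hgcont : ContinuousOn g (Set.Ioo (0:ℝ) (2*M)) := by
    apply ContinuousOn.div
    · exact ((continuous_const.mul continuous_id).sub continuous_const).continuousOn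
    · exact hsqcont.continuousOn
    · exact fun r hr => (habpos r hr).ne'
  -- g is strictly monotone on Ioo
  have hgmono : StrictMonoOn g (Set.Ioo (0:ℝ) (2*M)) := by
    apply strictMonoOn_of_deriv_pos (convex_Ioo _ _) hgcont
    intro r hr
    rw [interior_Ioo] at hr
    obtain ⟨d, hd, hder⟩ := aux_hasDerivAt_g hr.1 hr.2
    rw [hder.deriv]
    exact hd
  -- roots of E correspond to g = 3H
  have hroot : ∀ r ∈ Set.Ioo (0:ℝ) (2*M), E r = 0 → g r = 3 * H := by
    intro r hr hEr
    have hab := habpos r hr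
    rw [hg_def]
    simp only
    rw [div_eq_iff hab.ne']
    rw [hE_def] at hEr
    simp only at hEr
    linarith
  -- existence of a root via IVT
  have hE0 : E 0 = -3 * M := by
    simp [hE_def]
  have hE2M : E (2 * M) = M := by
    simp [hE_def]
    ring
  have hIVT : ∃ rH ∈ Set.Ioo (0:ℝ) (2*M), E rH = 0 := by
    have hle : (0:ℝ) ≤ 2 * M := by linarith
    have := intermediate_value_Icc hle hEcont.continuousOn
    have hmem : (0:ℝ) ∈ Set.Icc (E 0) (E (2*M)) := by
      rw [hE0, hE2M]; constructor <;> linarith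
    obtain ⟨c, hc, hEc⟩ := this hmem
    refine ⟨c, ⟨?_, ?_⟩, hEc⟩
    · rcases eq_or_lt_of_le hc.1 with h | h
      · exfalso; rw [← h] at hEc; rw [hE0] at hEc; linarith
      · exact h
    · rcases eq_or_lt_of_le hc.2 with h | h
      · exfalso; rw [h] at hEc; rw [hE2M] at hEc; linarith
      · exact h
  obtain ⟨rH, hrHmem, hErH⟩ := hIVT
  have hgrH : g rH = 3 * H := hroot rH hrHmem hErH
  -- uniqueness of the root
  have huniq : ∀ r ∈ Set.Ioo (0:ℝ) (2*M), E r = 0 → r = rH := by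
    intro r hr hEr
    exact hgmono.injOn hr hrHmem ((hroot r hr hEr).trans hgrH.symm)
  -- E in terms of g
  have hEg : ∀ r ∈ Set.Ioo (0:ℝ) (2*M),
      E r = (Real.sqrt (r ^ 3) * Real.sqrt (2 * M - r)) * (g r - 3 * H) := by
    intro r hr
    have hab := habpos r hr
    rw [hE_def, hg_def]
    simp only
    rw [mul_sub, mul_div_cancel₀ _ hab.ne']
    ring
  -- derivative of k
  have hderivk : ∀ r ∈ Set.Ioo (0:ℝ) (2*M),
      deriv k r = r ^ 2 * E r / (Real.sqrt (r ^ 3) * Real.sqrt (2 * M - r)) := by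
    intro r hr
    exact (aux_hasDerivAt_k hr.1 hr.2).deriv
  -- sign of deriv k
  have hderivneg : ∀ r ∈ Set.Ioo (0:ℝ) (2*M), r < rH → deriv k r < 0 := by
    intro r hr hlt
    rw [hderivk r hr]
    have hEr : E r < 0 := by
      rw [hEg r hr]
      have := hgmono hr hrHmem hlt
      rw [hgrH] at this
      exact mul_neg_of_pos_of_neg (habpos r hr) (by linarith)
    exact div_neg_of_neg_of_pos (mul_neg_of_pos_of_neg (pow_pos hr.1 2) hEr) (habpos r hr)
  have hderivpos : ∀ r ∈ Set.Ioo (0:ℝ) (2*M), rH < r → 0 < deriv k r := by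
    intro r hr hlt
    rw [hderivk r hr]
    have hEr : 0 < E r := by
      rw [hEg r hr]
      have := hgmono hrHmem hr hlt
      rw [hgrH] at this
      exact mul_pos (habpos r hr) (by linarith)
    exact div_pos (mul_pos (pow_pos hr.1 2) hEr) (habpos r hr)
  refine ⟨rH, hrHmem, ?_, ?_, ?_, ?_⟩
  · rw [hE_def] at hErH; simp only at hErH; linarith
  · intro r hr heq
    apply huniq r hr
    rw [hE_def]; simp only; linarith
  · intro r hr
    constructor
    · intro h
      rw [hderivk r hr] at h
      have hab := habpos r hr
      have hnum : r ^ 2 * E r = 0 := by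
        rcases div_eq_zero_iff.mp h with h' | h'
        · exact h'
        · exact absurd h' hab.ne'
      have hr2 : (r:ℝ) ^ 2 ≠ 0 := (pow_pos hr.1 2).ne'
      exact huniq r hr (by rcases mul_eq_zero.mp hnum with h' | h' <;> [exact absurd h' hr2; exact h'])
    · intro hre
      rw [hre, hderivk rH hrHmem, hErH]
      simp
  · intro r hr
    rcases lt_trichotomy r rH with hlt | heq | hgt
    · -- k strictly decreasing on [r, rH]
      have hanti : StrictAntiOn k (Set.Icc r rH) := by
        apply strictAntiOn_of_deriv_neg (convex_Icc _ _) hkcont.continuousOn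
        intro x hx
        rw [interior_Icc] at hx
        have hxm : x ∈ Set.Ioo (0:ℝ) (2*M) := ⟨lt_trans hr.1 hx.1, lt_trans hx.2 hrHmem.2⟩
        exact hderivneg x hxm hx.2
      have := hanti ⟨le_refl r, hlt.le⟩ ⟨hlt.le, le_refl rH⟩ hlt
      exact this.le
    · subst heq; exact le_rfl
    · have hmono : StrictMonoOn k (Set.Icc rH r) := by
        apply strictMonoOn_of_deriv_pos (convex_Icc _ _) hkcont.continuousOn
        intro x hx
        rw [interior_Icc] at hx
        have hxm : x ∈ Set.Ioo (0:ℝ) (2*M) := ⟨lt_trans hrHmem.1 hx.1, lt_trans hx.2 hr.2⟩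
        exact hderivpos x hxm hx.1
      have := hmono ⟨le_refl rH, hgt.le⟩ ⟨hgt.le, le_refl r⟩ hgt
      exact this.le
end

section
/- Let M>0 and H∈ℝ. Define k_H(r) = -Hr³ - r^{3/2}(2M-r)^{1/2} on (0,2M) and c_H = min_{(0,2M)} k_H. Then c_H < -8M³H. -/
open Real Set

/-- The minimum `c_H` of `k_H(r) = -Hr³ - r^{3/2}(2M-r)^{1/2}` on `(0,2M)` satisfies
`c_H < -8M³H`. -/
theorem stmt_14 (M H : ℝ) (hM : 0 < M) :
    sInf ((fun r : ℝ => -H * r ^ 3 - Real.sqrt (r ^ 3) * Real.sqrt (2 * M - r)) ''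
        Set.Ioo (0 : ℝ) (2 * M))
      < -8 * M ^ 3 * H := by
  set f : ℝ → ℝ := fun r : ℝ => -H * r ^ 3 - Real.sqrt (r ^ 3) * Real.sqrt (2 * M - r) with hf
  have hbdd : BddBelow (f '' Set.Ioo (0 : ℝ) (2 * M)) := by
    refine ⟨-|H| * (2 * M) ^ 3 - Real.sqrt ((2 * M) ^ 3) * Real.sqrt (2 * M), ?_⟩
    rintro y ⟨x, ⟨hx0, hx2⟩, rfl⟩
    have h1 : -|H| * (2 * M) ^ 3 ≤ -H * x ^ 3 := by
      have hax : |H * x ^ 3| ≤ |H| * (2 * M) ^ 3 := by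
        rw [abs_mul]
        have : |x ^ 3| ≤ (2 * M) ^ 3 := by
          rw [abs_of_nonneg (by positivity)]
          exact pow_le_pow_left₀ hx0.le hx2.le 3
        exact mul_le_mul_of_nonneg_left this (abs_nonneg H)
      linarith [le_abs_self (H * x ^ 3)]
    have h2 : Real.sqrt (x ^ 3) * Real.sqrt (2 * M - x)
        ≤ Real.sqrt ((2 * M) ^ 3) * Real.sqrt (2 * M) :=
      mul_le_mul (Real.sqrt_le_sqrt (pow_le_pow_left₀ hx0.le hx2.le 3)) (Real.sqrt_le_sqrt (by linarith))
        (Real.sqrt_nonneg _) (Real.sqrt_nonneg _)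
    simp only [hf]
    linarith
  rcases le_or_gt H 0 with hH | hH
  · -- use r = M
    have hmem : f M ∈ f '' Set.Ioo (0 : ℝ) (2 * M) :=
      ⟨M, ⟨hM, by linarith⟩, rfl⟩
    have hsq : Real.sqrt (M ^ 3) * Real.sqrt (2 * M - M) = M ^ 2 := by
      rw [← Real.sqrt_mul (by positivity)]
      have : M ^ 3 * (2 * M - M) = (M ^ 2) ^ 2 := by ring
      rw [this, Real.sqrt_sq (by positivity)]
    have hval : f M < -8 * M ^ 3 * H := by
      simp only [hf, hsq]
      nlinarith [mul_nonpos_of_nonpos_of_nonneg hH (pow_pos hM 3).le, pow_pos hM 2]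
    exact lt_of_le_of_lt (csInf_le hbdd hmem) hval
  · -- H > 0 : take r = 2M - ε with ε small
    set ε : ℝ := M / (1 + 144 * M ^ 2 * H ^ 2) with hε
    have hden : (0:ℝ) < 1 + 144 * M ^ 2 * H ^ 2 := by positivity
    have hε0 : 0 < ε := by positivity
    have hεM : ε ≤ M := div_le_self hM.le (le_add_of_nonneg_right (by positivity))
    have hεlt : 144 * M ^ 2 * H ^ 2 * ε < M := by
      rw [hε, mul_div_assoc', div_lt_iff₀ hden]
      nlinarith
    set r : ℝ := 2 * M - ε with hr
    have hrM : M ≤ r := by simp only [hr]; linarith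
    have hmem : f r ∈ f '' Set.Ioo (0 : ℝ) (2 * M) :=
      ⟨r, ⟨by simp only [hr]; linarith, by simp only [hr]; linarith⟩, rfl⟩
    set s : ℝ := Real.sqrt ε with hs
    have hs0 : 0 < s := Real.sqrt_pos.mpr hε0
    have hs2 : s ^ 2 = ε := Real.sq_sqrt hε0.le
    -- key: 12 M² H s < M √M
    have hkey : 12 * M ^ 2 * H * s < M * Real.sqrt M := by
      have hb : 0 ≤ M * Real.sqrt M := by positivity
      refine lt_of_pow_lt_pow_left₀ 2 hb ?_
      have hMsq : (M * Real.sqrt M) ^ 2 = M ^ 2 * M := by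
        rw [mul_pow, Real.sq_sqrt hM.le]
      rw [hMsq]
      have : (12 * M ^ 2 * H * s) ^ 2 = 144 * M ^ 2 * H ^ 2 * ε * M ^ 2 := by
        rw [mul_pow]; rw [hs2]; ring
      rw [this]
      nlinarith [mul_lt_mul_of_pos_right hεlt (pow_pos hM 2)]
    have hsqrt_r : M * Real.sqrt M ≤ Real.sqrt (r ^ 3) := by
      have : M * Real.sqrt M = Real.sqrt (M ^ 3) := by
        rw [show M ^ 3 = M ^ 2 * M by ring, Real.sqrt_mul (by positivity),
          Real.sqrt_sq hM.le]
      rw [this]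
      exact Real.sqrt_le_sqrt (pow_le_pow_left₀ hM.le hrM 3)
    have hsm : Real.sqrt (2 * M - r) = s := by simp [hr, hs]
    have hval : f r < -8 * M ^ 3 * H := by
      simp only [hf, hsm]
      have h3 : H * (8 * M ^ 3 - r ^ 3) ≤ 12 * M ^ 2 * H * (s * s) := by
        have hfac : 8 * M ^ 3 - r ^ 3 = (2 * M - r) * (4 * M ^ 2 + 2 * M * r + r ^ 2) := by
          ring
        have h2Mr : 2 * M - r = s * s := by
          simp only [hr]; nlinarith
        have hub : 4 * M ^ 2 + 2 * M * r + r ^ 2 ≤ 12 * M ^ 2 := by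
          have hr2 : r ≤ 2 * M := by simp only [hr]; linarith
          nlinarith
        rw [hfac, h2Mr]
        have hss : 0 ≤ s * s := by positivity
        nlinarith [mul_le_mul_of_nonneg_left (mul_le_mul_of_nonneg_left hub hss) hH.le]
      have h4 : M * Real.sqrt M * s ≤ Real.sqrt (r ^ 3) * s :=
        mul_le_mul_of_nonneg_right hsqrt_r hs0.le
      nlinarith [mul_lt_mul_of_pos_right hkey hs0]
    exact lt_of_le_of_lt (csInf_le hbdd hmem) hval
end

section
/- Let M>0 and H∈ℝ. Define k̃_H(r) = -Hr³ + r^{3/2}(2M-r)^{1/2} on (0,2M). Then k̃_H has a unique critical point R_H ∈ (0,2M), determined by -3H·R_H^{3/2}(2M-R_H)^{1/2} = 2R_H - 3M, and k̃_H attains its maximum on (0,2M) at R_H; moreover C_H := k̃_H(R_H) > -8M³H. -/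
open Real Set

lemma sqrt_cube (r : ℝ) (hr : 0 ≤ r) : Real.sqrt (r ^ 3) = r * Real.sqrt r := by
  rw [show r ^ 3 = r ^ 2 * r by ring, Real.sqrt_mul (by positivity), Real.sqrt_sq hr]

lemma hasDerivAt_V (M r : ℝ) (hr : 0 < r) (hr2 : r < 2 * M) :
    HasDerivAt (fun x : ℝ => Real.sqrt (x ^ 3) * Real.sqrt (2 * M - x))
      (r * (3 * M - 2 * r) / (Real.sqrt r * Real.sqrt (2 * M - r))) r := by
  have h1 : HasDerivAt (fun x : ℝ => x ^ 3) (3 * r ^ 2) r := by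
    simpa using hasDerivAt_pow 3 r
  have h1' := h1.sqrt (by positivity)
  have h2 : HasDerivAt (fun x : ℝ => 2 * M - x) (-1) r := by
    simpa using (hasDerivAt_id r).const_sub (2 * M)
  have h2' := h2.sqrt (by intro h; nlinarith [h])
  have := h1'.mul h2'
  convert this using 1
  iterate 3 rfl
  have ha : (0:ℝ) < Real.sqrt r := Real.sqrt_pos.2 hr
  have hb : (0:ℝ) < Real.sqrt (2 * M - r) := Real.sqrt_pos.2 (by linarith)
  have ha2 : Real.sqrt r ^ 2 = r := Real.sq_sqrt hr.le
  have hb2 : Real.sqrt (2 * M - r) ^ 2 = 2 * M - r := Real.sq_sqrt (by linarith)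
  rw [sqrt_cube r hr.le]
  set a := Real.sqrt r
  set b := Real.sqrt (2 * M - r)
  field_simp
  linear_combination ha2 - 3 * hb2

noncomputable def phiK (M r : ℝ) : ℝ :=
  (2 * r - 3 * M) / (Real.sqrt (r ^ 3) * Real.sqrt (2 * M - r))

lemma hasDerivAt_fKH (M H r : ℝ) (hr : 0 < r) (hr2 : r < 2 * M) :
    HasDerivAt (fun x : ℝ => -H * x ^ 3 + Real.sqrt (x ^ 3) * Real.sqrt (2 * M - x))
      (r ^ 2 * (-3 * H - phiK M r)) r := by
  have h1 : HasDerivAt (fun x : ℝ => -H * x ^ 3) (-H * (3 * r ^ 2)) r := by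
    simpa using (hasDerivAt_pow 3 r).const_mul (-H)
  have := h1.add (hasDerivAt_V M r hr hr2)
  convert this using 1
  iterate 3 rfl
  have ha : (0:ℝ) < Real.sqrt r := Real.sqrt_pos.2 hr
  have hb : (0:ℝ) < Real.sqrt (2 * M - r) := Real.sqrt_pos.2 (by linarith)
  rw [phiK, sqrt_cube r hr.le]
  set a := Real.sqrt r
  set b := Real.sqrt (2 * M - r)
  field_simp
  ring

lemma hasDerivAt_phiK (M r : ℝ) (hM : 0 < M) (hr : 0 < r) (hr2 : r < 2 * M) :
    ∃ d, HasDerivAt (phiK M) d r ∧ 0 < d := by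
  have ha : (0:ℝ) < Real.sqrt r := Real.sqrt_pos.2 hr
  have hb : (0:ℝ) < Real.sqrt (2 * M - r) := Real.sqrt_pos.2 (by linarith)
  have ha2 : Real.sqrt r ^ 2 = r := Real.sq_sqrt hr.le
  have hb2 : Real.sqrt (2 * M - r) ^ 2 = 2 * M - r := Real.sq_sqrt (by linarith)
  have hV := hasDerivAt_V M r hr hr2
  have hu : HasDerivAt (fun x : ℝ => 2 * x - 3 * M) 2 r := by
    simpa using ((hasDerivAt_id r).const_mul 2).sub_const (3 * M)
  have hVne : Real.sqrt (r ^ 3) * Real.sqrt (2 * M - r) ≠ 0 := by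
    rw [sqrt_cube r hr.le]; positivity
  have hd := hu.div hV hVne
  refine ⟨_, hd, ?_⟩
  apply div_pos ?_ (by positivity)
  rw [sqrt_cube r hr.le]
  set a := Real.sqrt r
  set b := Real.sqrt (2 * M - r)
  have key : (2 * (r * a * b) - (2 * r - 3 * M) * (r * (3 * M - 2 * r) / (a * b))) * (a * b)
      = 2 * r * r * (2 * M - r) + r * (2 * r - 3 * M) ^ 2 := by
    field_simp
    linear_combination 2*b^2 * ha2 + 2*r * hb2
  have hpos : 0 < 2 * r * r * (2 * M - r) + r * (2 * r - 3 * M) ^ 2 := by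
    have h2r : (0:ℝ) < 2 * M - r := by linarith
    have h3 : 0 < 2 * r * r * (2 * M - r) := by positivity
    nlinarith [sq_nonneg (2 * r - 3 * M)]
  have hab : 0 < a * b := mul_pos ha hb
  nlinarith [key, hpos, hab, mul_pos hab hab]

lemma phiK_strictMono (M : ℝ) (hM : 0 < M) : StrictMonoOn (phiK M) (Ioo 0 (2 * M)) := by
  apply strictMonoOn_of_deriv_pos (convex_Ioo _ _)
  · intro r hr
    obtain ⟨d, hd, -⟩ := hasDerivAt_phiK M r hM hr.1 hr.2
    exact hd.continuousAt.continuousWithinAt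
  · intro r hr
    rw [interior_Ioo] at hr
    obtain ⟨d, hd, hdpos⟩ := hasDerivAt_phiK M r hM hr.1 hr.2
    rwa [hd.deriv]

/-- `k̃_H(r) = -Hr³ + r^{3/2}(2M-r)^{1/2}` has a unique critical point `R_H ∈ (0,2M)`,
determined by `-3H R_H^{3/2}(2M-R_H)^{1/2} = 2R_H - 3M`, where `k̃_H` attains its maximum on
`(0,2M)`; moreover `C_H = k̃_H(R_H) > -8M³H`. -/
theorem stmt_17 (M H : ℝ) (hM : 0 < M) :
    ∃ RH ∈ Set.Ioo (0 : ℝ) (2 * M),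
      -3 * H * Real.sqrt (RH ^ 3) * Real.sqrt (2 * M - RH) = 2 * RH - 3 * M ∧
      (∀ r ∈ Set.Ioo (0 : ℝ) (2 * M),
        deriv (fun r : ℝ => -H * r ^ 3 + Real.sqrt (r ^ 3) * Real.sqrt (2 * M - r)) r = 0
          ↔ r = RH) ∧
      (∀ r ∈ Set.Ioo (0 : ℝ) (2 * M),
        -H * r ^ 3 + Real.sqrt (r ^ 3) * Real.sqrt (2 * M - r)
          ≤ -H * RH ^ 3 + Real.sqrt (RH ^ 3) * Real.sqrt (2 * M - RH)) ∧
      -8 * M ^ 3 * H < -H * RH ^ 3 + Real.sqrt (RH ^ 3) * Real.sqrt (2 * M - RH) := by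
  have hfc : Continuous (fun x : ℝ => -H * x ^ 3 + Real.sqrt (x ^ 3) * Real.sqrt (2 * M - x)) := by
    fun_prop
  set f : ℝ → ℝ := fun x => -H * x ^ 3 + Real.sqrt (x ^ 3) * Real.sqrt (2 * M - x) with hfdef
  -- existence of RH via IVT on g
  set g : ℝ → ℝ := fun x => -3 * H * Real.sqrt (x ^ 3) * Real.sqrt (2 * M - x) - (2 * x - 3 * M)
    with hgdef
  have hgc : Continuous g := by rw [hgdef]; fun_prop
  have hg0 : g 0 = 3 * M := by simp [hgdef]
  have hg2 : g (2 * M) = -M := by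
    simp only [hgdef, sub_self, Real.sqrt_zero, mul_zero, zero_sub]
    ring
  have h0mem : (0:ℝ) ∈ Ioo (g (2 * M)) (g 0) := by
    rw [hg0, hg2]; exact ⟨by linarith, by linarith⟩
  obtain ⟨R, hRmem, hgR⟩ :=
    intermediate_value_Ioo' (by linarith : (0:ℝ) ≤ 2 * M) hgc.continuousOn h0mem
  have hR1 : 0 < R := hRmem.1
  have hR2 : R < 2 * M := hRmem.2
  have eq1 : -3 * H * Real.sqrt (R ^ 3) * Real.sqrt (2 * M - R) = 2 * R - 3 * M := by
    have := hgR; simp only [hgdef] at this; linarith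
  have hVpos : 0 < Real.sqrt (R ^ 3) * Real.sqrt (2 * M - R) := by
    apply mul_pos (Real.sqrt_pos.2 (by positivity)) (Real.sqrt_pos.2 (by linarith))
  have hphiR : phiK M R = -3 * H := by
    rw [phiK, div_eq_iff (ne_of_gt hVpos)]
    linear_combination -eq1
  refine ⟨R, hRmem, eq1, ?_, ?_, ?_⟩
  · -- critical point characterization
    intro r hr
    have hder := hasDerivAt_fKH M H r hr.1 hr.2
    rw [hder.deriv]
    constructor
    · intro h0
      have hr2ne : (r:ℝ) ^ 2 ≠ 0 := pow_ne_zero 2 (ne_of_gt hr.1)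
      have h1 : -3 * H - phiK M r = 0 := by
        rcases mul_eq_zero.mp h0 with h | h
        · exact absurd h hr2ne
        · exact h
      have h2 : phiK M r = phiK M R := by rw [hphiR]; linarith
      exact (phiK_strictMono M hM).injOn hr hRmem h2
    · rintro rfl
      rw [hphiR]; ring
  · -- maximum
    intro r hr
    rcases lt_trichotomy r R with hlt | heq | hgt
    · have mono : StrictMonoOn f (Icc r R) := by
        apply strictMonoOn_of_deriv_pos (convex_Icc _ _) hfc.continuousOn
        intro x hx
        rw [interior_Icc] at hx
        have hx0 : 0 < x := lt_trans hr.1 hx.1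
        have hx2 : x < 2 * M := lt_trans hx.2 hR2
        rw [(hasDerivAt_fKH M H x hx0 hx2).deriv]
        have hphi : phiK M x < phiK M R := phiK_strictMono M hM ⟨hx0, hx2⟩ hRmem hx.2
        rw [hphiR] at hphi
        have h1 : 0 < -3 * H - phiK M x := by linarith
        exact mul_pos (by positivity) h1
      exact (mono ⟨le_refl r, hlt.le⟩ ⟨hlt.le, le_refl R⟩ hlt).le
    · rw [heq]
    · have anti : StrictAntiOn f (Icc R r) := by
        apply strictAntiOn_of_deriv_neg (convex_Icc _ _) hfc.continuousOn
        intro x hx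
        rw [interior_Icc] at hx
        have hx0 : 0 < x := lt_trans hR1 hx.1
        have hx2 : x < 2 * M := lt_trans hx.2 hr.2
        rw [(hasDerivAt_fKH M H x hx0 hx2).deriv]
        have hphi : phiK M R < phiK M x := phiK_strictMono M hM hRmem ⟨hx0, hx2⟩ hx.1
        rw [hphiR] at hphi
        have h1 : -3 * H - phiK M x < 0 := by linarith
        have h2 : (0:ℝ) < x ^ 2 := by positivity
        nlinarith
      exact (anti ⟨le_refl R, hgt.le⟩ ⟨hgt.le, le_refl r⟩ hgt).le
  · -- C_H > -8 M^3 H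
    have anti : StrictAntiOn f (Icc R (2 * M)) := by
      apply strictAntiOn_of_deriv_neg (convex_Icc _ _) hfc.continuousOn
      intro x hx
      rw [interior_Icc] at hx
      have hx0 : 0 < x := lt_trans hR1 hx.1
      have hx2 : x < 2 * M := hx.2
      rw [(hasDerivAt_fKH M H x hx0 hx2).deriv]
      have hphi : phiK M R < phiK M x := phiK_strictMono M hM hRmem ⟨hx0, hx2⟩ hx.1
      rw [hphiR] at hphi
      have h1 : -3 * H - phiK M x < 0 := by linarith
      have h2 : (0:ℝ) < x ^ 2 := by positivity
      nlinarith
    have hlt := anti ⟨le_refl R, hR2.le⟩ ⟨hR2.le, le_refl (2 * M)⟩ hR2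
    have hf2M : f (2 * M) = -8 * M ^ 3 * H := by
      simp only [hfdef, sub_self, Real.sqrt_zero, mul_zero, add_zero]
      ring
    rw [hf2M] at hlt
    exact hlt
end

section
/- Let M>0, H∈ℝ, c₁ < -8M³H, and c₂ < -8M³H. Suppose lim_{r→2M⁺} ( f₁'(r) + 1/h(r) ) = lim_{r→2M⁻} ( f₂'(r) + 1/h(r) ), where h(r)=1-2M/r, f₁'(r) = (l₁/h)√(1/(1+l₁²)) with l₁(r)=(1/√h)(Hr+c₁/r²) for r>2M, and f₂'(r) = (1/(-h))√(l₂²/(l₂²-1)) with l₂(r)=(1/√(-h))(-Hr-c₂/r²) for r<2M. Given that these limits equal 1/(2(2MH + c₁/(4M²))²) and 1/(2(-2MH - c₂/(4M²))²) respectively, conclude c₂ = c₁. -/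
open Real

/-- Matching condition across the horizon: if `c₁ < -8M³H`, `c₂ < -8M³H` and the finite parts
of the slopes agree, i.e. `1/(2(2MH + c₁/(4M²))²) = 1/(2(-2MH - c₂/(4M²))²)`, then `c₂ = c₁`. -/
theorem stmt_18 (M H c₁ c₂ : ℝ) (hM : 0 < M)
    (hc₁ : c₁ < -8 * M ^ 3 * H) (hc₂ : c₂ < -8 * M ^ 3 * H)
    (heq : 1 / (2 * (2 * M * H + c₁ / (4 * M ^ 2)) ^ 2)
      = 1 / (2 * (-2 * M * H - c₂ / (4 * M ^ 2)) ^ 2)) :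
    c₂ = c₁ := by
  have hM2 : (0:ℝ) < 4 * M ^ 2 := by positivity
  have ha : 2 * M * H + c₁ / (4 * M ^ 2) < 0 := by
    have h : c₁ / (4 * M ^ 2) < -(2 * M * H) := by
      rw [div_lt_iff₀ hM2]; nlinarith
    linarith
  have hb : 0 < -2 * M * H - c₂ / (4 * M ^ 2) := by
    have h : c₂ / (4 * M ^ 2) < -(2 * M * H) := by
      rw [div_lt_iff₀ hM2]; nlinarith
    linarith
  set a := 2 * M * H + c₁ / (4 * M ^ 2) with hadef
  set b := -2 * M * H - c₂ / (4 * M ^ 2) with hbdef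
  have ha0 : a ≠ 0 := ne_of_lt ha
  have hb0 : b ≠ 0 := ne_of_gt hb
  have h1 : a ^ 2 = b ^ 2 := by
    rw [div_eq_div_iff (by positivity) (by positivity)] at heq
    nlinarith [heq]
  have hab : a + b = 0 := by
    have h3 : (a + b) * (a - b) = 0 := by
      have h4 : (a + b) * (a - b) = a ^ 2 - b ^ 2 := by ring
      rw [h4, h1, sub_self]
    rcases mul_eq_zero.mp h3 with h | h
    · exact h
    · nlinarith
  have : (c₁ - c₂) / (4 * M ^ 2) = 0 := by
    rw [hadef, hbdef] at hab
    field_simp at hab ⊢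
    linarith
  have := (div_eq_zero_iff.mp this).resolve_right (by positivity)
  linarith
end

section
/- Let M>0, H∈ℝ, c₁∈ℝ. Define f̄'(r) = r⁴ / ( (Hr³+c₁)² + r³(r-2M) - (Hr³+c₁)·√((Hr³+c₁)² + r³(r-2M)) ). If c₁ < -8M³H, then for r in a neighborhood of 2M with r>2M one has f̄'(r) = f₁'(r) + 1/h(r), where h(r)=1-2M/r and f₁'(r)=(l₁/h)√(1/(1+l₁²)), l₁(r)=(1/√h)(Hr+c₁/r²); in particular f̄' extends continuously to r=2M with value f̄'(2M) = 1/(2(2MH + c₁/(4M²))²). -/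
open Real Set Filter

lemma key (M H c₁ r : ℝ) (hM : 0 < M) (hr : 2 * M < r) :
    r ^ 4 / ((H * r ^ 3 + c₁) ^ 2 + r ^ 3 * (r - 2 * M) -
        (H * r ^ 3 + c₁) * Real.sqrt ((H * r ^ 3 + c₁) ^ 2 + r ^ 3 * (r - 2 * M)))
      = ((1 / Real.sqrt (1 - 2 * M / r)) * (H * r + c₁ / r ^ 2)) / (1 - 2 * M / r) *
          Real.sqrt (1 / (1 + ((1 / Real.sqrt (1 - 2 * M / r)) * (H * r + c₁ / r ^ 2)) ^ 2))
        + 1 / (1 - 2 * M / r) := by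
  have hr0 : 0 < r := by linarith
  have hh : 0 < 1 - 2 * M / r := by
    rw [sub_pos, div_lt_one hr0]; exact hr
  set A := H * r ^ 3 + c₁ with hA
  set D := A ^ 2 + r ^ 3 * (r - 2 * M) with hDdef
  have hDA : A ^ 2 < D := by
    have : 0 < r ^ 3 * (r - 2 * M) := mul_pos (by positivity) (by linarith)
    linarith
  have hDpos : 0 < D := lt_of_le_of_lt (sq_nonneg A) hDA
  set s := Real.sqrt D with hsdef
  have hs2 : s ^ 2 = D := Real.sq_sqrt hDpos.le
  have hs0 : 0 < s := Real.sqrt_pos.mpr hDpos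
  have hsA : A < s := by
    have h1 : |A| < s := by
      rw [← Real.sqrt_sq_eq_abs]
      exact Real.sqrt_lt_sqrt (sq_nonneg A) hDA
    exact lt_of_le_of_lt (le_abs_self A) h1
  set h := 1 - 2 * M / r with hhdef
  set t := Real.sqrt h with htdef
  have ht0 : 0 < t := Real.sqrt_pos.mpr hh
  have ht2 : t ^ 2 = h := Real.sq_sqrt hh.le
  have hhr : h * r = r - 2 * M := by
    rw [hhdef, sub_mul, one_mul, div_mul_cancel₀ _ hr0.ne']
  have hD' : D = A ^ 2 + r ^ 4 * h := by
    rw [hDdef]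
    have e : r ^ 4 * h = r ^ 3 * (h * r) := by ring
    rw [e, hhr]
  have hl : H * r + c₁ / r ^ 2 = A / r ^ 2 := by
    rw [hA, add_div]
    congr 1
    rw [eq_div_iff (by positivity : (r:ℝ) ^ 2 ≠ 0)]
    ring
  rw [hl]
  have hsq : Real.sqrt (1 / (1 + ((1 / t) * (A / r ^ 2)) ^ 2)) = t * r ^ 2 / s := by
    have e1 : ((1 / t) * (A / r ^ 2)) ^ 2 = A ^ 2 / (h * r ^ 4) := by
      rw [mul_pow, div_pow, div_pow, one_pow, ← ht2]
      ring
    have e2 : 1 + A ^ 2 / (h * r ^ 4) = D / (h * r ^ 4) := by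
      rw [hD']; field_simp; ring
    have e3 : (1 : ℝ) / (D / (h * r ^ 4)) = (t * r ^ 2 / s) ^ 2 := by
      rw [one_div_div, div_pow, mul_pow, ht2, hs2]
      ring
    rw [e1, e2, e3, Real.sqrt_sq (by positivity)]
  rw [hsq]
  have hden : D - A * s = s * (s - A) := by rw [← hs2]; ring
  rw [hden]
  have hr4 : r ^ 4 = (s - A) * (s + A) / h := by
    have e : (s - A) * (s + A) = s ^ 2 - A ^ 2 := by ring
    rw [e, hs2, hD']
    field_simp
    ring
  rw [hr4]
  have hsAne : s - A ≠ 0 := ne_of_gt (by linarith)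
  field_simp
  ring

lemma valAt (M H c₁ : ℝ) (hM : 0 < M) (hc : c₁ < -8 * M ^ 3 * H) :
    (2 * M) ^ 4 / ((H * (2 * M) ^ 3 + c₁) ^ 2 + (2 * M) ^ 3 * (2 * M - 2 * M) -
        (H * (2 * M) ^ 3 + c₁) *
          Real.sqrt ((H * (2 * M) ^ 3 + c₁) ^ 2 + (2 * M) ^ 3 * (2 * M - 2 * M)))
      = 1 / (2 * (2 * M * H + c₁ / (4 * M ^ 2)) ^ 2) := by
  have hA0 : H * (2 * M) ^ 3 + c₁ < 0 := by nlinarith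
  rw [sub_self, mul_zero, add_zero, Real.sqrt_sq_eq_abs, abs_of_neg hA0]
  have key2 : 2 * M * H + c₁ / (4 * M ^ 2) = (H * (2 * M) ^ 3 + c₁) / (4 * M ^ 2) := by
    field_simp; ring
  rw [key2]
  have hA0' : H * (2 * M) ^ 3 + c₁ ≠ 0 := ne_of_lt hA0
  have hM' : (M : ℝ) ≠ 0 := ne_of_gt hM
  have h2 : (H * (2 * M) ^ 3 + c₁) ^ 2 -
      (H * (2 * M) ^ 3 + c₁) * (-(H * (2 * M) ^ 3 + c₁)) = 2 * (H * (2 * M) ^ 3 + c₁) ^ 2 := by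
    ring
  rw [h2]
  have hq : (H * (2 * M) ^ 3 + c₁) / (4 * M ^ 2) ≠ 0 := div_ne_zero hA0' (by positivity)
  have hpos : 0 < 2 * ((H * (2 * M) ^ 3 + c₁) / (4 * M ^ 2)) ^ 2 :=
    mul_pos two_pos (lt_of_le_of_ne (sq_nonneg _) (Ne.symm (pow_ne_zero 2 hq)))
  rw [div_eq_div_iff (by positivity) (ne_of_gt hpos)]
  field_simp
  ring

lemma limAt (M H c₁ : ℝ) (hM : 0 < M) (hc : c₁ < -8 * M ^ 3 * H) :
    Filter.Tendsto
      (fun r : ℝ => r ^ 4 / ((H * r ^ 3 + c₁) ^ 2 + r ^ 3 * (r - 2 * M) -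
        (H * r ^ 3 + c₁) * Real.sqrt ((H * r ^ 3 + c₁) ^ 2 + r ^ 3 * (r - 2 * M))))
      (nhdsWithin (2 * M) (Set.Ioi (2 * M)))
      (nhds (1 / (2 * (2 * M * H + c₁ / (4 * M ^ 2)) ^ 2))) := by
  have hA0 : H * (2 * M) ^ 3 + c₁ < 0 := by nlinarith
  have hne : (H * (2 * M) ^ 3 + c₁) ^ 2 + (2 * M) ^ 3 * (2 * M - 2 * M) -
      (H * (2 * M) ^ 3 + c₁) *
        Real.sqrt ((H * (2 * M) ^ 3 + c₁) ^ 2 + (2 * M) ^ 3 * (2 * M - 2 * M)) ≠ 0 := by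
    rw [sub_self, mul_zero, add_zero, Real.sqrt_sq_eq_abs, abs_of_neg hA0]
    nlinarith
  have hcont : ContinuousAt
      (fun r : ℝ => r ^ 4 / ((H * r ^ 3 + c₁) ^ 2 + r ^ 3 * (r - 2 * M) -
        (H * r ^ 3 + c₁) * Real.sqrt ((H * r ^ 3 + c₁) ^ 2 + r ^ 3 * (r - 2 * M))))
      (2 * M) := by
    apply ContinuousAt.div
    · fun_prop
    · fun_prop
    · exact hne
  have := (hcont.tendsto).mono_left (nhdsWithin_le_nhds (s := Set.Ioi (2 * M)))
  rwa [valAt M H c₁ hM hc] at this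


/-- For `c₁ < -8M³H`, the regular part `f̄'(r)` agrees with `f₁'(r) + 1/h(r)` near `r = 2M⁺`
and extends continuously to `r = 2M` with value `1/(2(2MH + c₁/(4M²))²)`. -/
theorem stmt_19 (M H c₁ : ℝ) (hM : 0 < M) (hc : c₁ < -8 * M ^ 3 * H) :
    (∃ δ > (0 : ℝ), ∀ r ∈ Set.Ioo (2 * M) (2 * M + δ),
      r ^ 4 / ((H * r ^ 3 + c₁) ^ 2 + r ^ 3 * (r - 2 * M) -
          (H * r ^ 3 + c₁) * Real.sqrt ((H * r ^ 3 + c₁) ^ 2 + r ^ 3 * (r - 2 * M)))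
        = ((1 / Real.sqrt (1 - 2 * M / r)) * (H * r + c₁ / r ^ 2)) / (1 - 2 * M / r) *
            Real.sqrt (1 / (1 + ((1 / Real.sqrt (1 - 2 * M / r)) * (H * r + c₁ / r ^ 2)) ^ 2))
          + 1 / (1 - 2 * M / r)) ∧
    Filter.Tendsto
      (fun r : ℝ => r ^ 4 / ((H * r ^ 3 + c₁) ^ 2 + r ^ 3 * (r - 2 * M) -
        (H * r ^ 3 + c₁) * Real.sqrt ((H * r ^ 3 + c₁) ^ 2 + r ^ 3 * (r - 2 * M))))
      (nhdsWithin (2 * M) (Set.Ioi (2 * M)))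
      (nhds (1 / (2 * (2 * M * H + c₁ / (4 * M ^ 2)) ^ 2))) ∧
    (2 * M) ^ 4 / ((H * (2 * M) ^ 3 + c₁) ^ 2 + (2 * M) ^ 3 * (2 * M - 2 * M) -
        (H * (2 * M) ^ 3 + c₁) *
          Real.sqrt ((H * (2 * M) ^ 3 + c₁) ^ 2 + (2 * M) ^ 3 * (2 * M - 2 * M)))
      = 1 / (2 * (2 * M * H + c₁ / (4 * M ^ 2)) ^ 2) := by
  exact ⟨⟨M, hM, fun r hr => key M H c₁ r hM hr.1⟩, limAt M H c₁ hM hc, valAt M H c₁ hM hc⟩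
end
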